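/- Let 𝒜 be a unital associative ℂ-algebra, fix ρ ∈ ℂ and a sign (upper = orthogonal, lower = symplectic), and suppose S(u) ∈ Mat_{2n}(𝒜), defined for u in a cofinite subset of ℂ, satisfies the reflection equation 𝓡₁₂(u−v) S₁(u) 𝓡^t₁₂(−u−v−ρ) S₂(v) = S₂(v) 𝓡^t₁₂(−u−v−ρ) S₁(u) 𝓡₁₂(u−v) on ℂ^{2n} ⊗ ℂ^{2n} for all admissible u, v. Write S(u) in n×n blocks [[A(u), B(u)], [C(u), D(u)]]. Then the block B satisfies: R₁₂(u−v) B₁(u) R^t₁₂(−u−v−ρ) B₂(v) = B₂(v) R^t₁₂(−u−v−ρ) B₁(u) R₁₂(u−v), where on ℂⁿ ⊗ ℂⁿ: R(u) = I − u⁻¹P, R^t(u) = I − u⁻¹Q and Q = Σ_{i,j} e_{ij} ⊗ e_{j̄ ī} (orthogonal type, ī = n−i+1). -/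

import Mathlib

noncomputable section

open Matrix

/-- The permutation operator `P` on `ℂ^N ⊗ ℂ^N`. -/
def permP (N : ℕ) : Matrix (Fin N × Fin N) (Fin N × Fin N) ℂ :=
  fun x y => if x.1 = y.2 ∧ x.2 = y.1 then 1 else 0

/-- The operator `Q = Σ θ_{ij} e_{ij} ⊗ e_{ī j̄}`, `ī = N − i + 1` being `Fin.rev`. -/
def Qop (N : ℕ) (θ : Fin N → ℂ) : Matrix (Fin N × Fin N) (Fin N × Fin N) ℂ :=
  fun x y => if x.2 = Fin.rev x.1 ∧ y.2 = Fin.rev y.1 then θ x.1 * θ y.1 else 0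

/-- The Yang R-matrix `R(u) = I − u⁻¹P` with entries mapped into an algebra `A`. -/
def yangRA (N : ℕ) (A : Type*) [Ring A] [Algebra ℂ A] (u : ℂ) :
    Matrix (Fin N × Fin N) (Fin N × Fin N) A :=
  ((1 : Matrix _ _ ℂ) - u⁻¹ • permP N).map (algebraMap ℂ A)

/-- `R^t(u) = I − u⁻¹Q` with entries mapped into an algebra `A`. -/
def yangRtA (N : ℕ) (θ : Fin N → ℂ) (A : Type*) [Ring A] [Algebra ℂ A] (u : ℂ) :
    Matrix (Fin N × Fin N) (Fin N × Fin N) A :=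
  ((1 : Matrix _ _ ℂ) - u⁻¹ • Qop N θ).map (algebraMap ℂ A)

/-- `X₁ = X ⊗ I`. -/
def op1 {N : ℕ} {A : Type*} [Ring A] (X : Matrix (Fin N) (Fin N) A) :
    Matrix (Fin N × Fin N) (Fin N × Fin N) A :=
  fun x y => if x.2 = y.2 then X x.1 y.1 else 0

/-- `X₂ = I ⊗ X`. -/
def op2 {N : ℕ} {A : Type*} [Ring A] (X : Matrix (Fin N) (Fin N) A) :
    Matrix (Fin N × Fin N) (Fin N × Fin N) A :=
  fun x y => if x.1 = y.1 then X x.2 y.2 else 0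

/-- Embedding `Fin n → Fin (2n)`, `i ↦ i`. -/
def lo (n : ℕ) (i : Fin n) : Fin (2 * n) := ⟨i.1, by have := i.2; omega⟩

/-- Embedding `Fin n → Fin (2n)`, `i ↦ n + i`. -/
def hi (n : ℕ) (i : Fin n) : Fin (2 * n) := ⟨n + i.1, by have := i.2; omega⟩

/-- The upper-right block `B(u) = (s_{i,n+j}(u))_{1≤i,j≤n}`. -/
def blockB {n : ℕ} {A : Type*} (X : Matrix (Fin (2 * n)) (Fin (2 * n)) A) :
    Matrix (Fin n) (Fin n) A := fun i j => X (lo n i) (hi n j)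

/-- The orthogonal-type signs on `ℂⁿ` (all equal to `1`). -/
def orthTheta (n : ℕ) : Fin n → ℂ := fun _ => 1

section Aux

variable {n : ℕ} {A : Type*} [Ring A] [Algebra ℂ A]

/-- Embedding of pairs: (lo, lo). -/
def fll {n : ℕ} (p : Fin n × Fin n) : Fin (2 * n) × Fin (2 * n) := (lo n p.1, lo n p.2)
/-- Embedding of pairs: (hi, lo). -/
def fhl {n : ℕ} (p : Fin n × Fin n) : Fin (2 * n) × Fin (2 * n) := (hi n p.1, lo n p.2)
/-- Embedding of pairs: (lo, hi). -/
def flh {n : ℕ} (p : Fin n × Fin n) : Fin (2 * n) × Fin (2 * n) := (lo n p.1, hi n p.2)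
/-- Embedding of pairs: (hi, hi). -/
def fhh {n : ℕ} (p : Fin n × Fin n) : Fin (2 * n) × Fin (2 * n) := (hi n p.1, hi n p.2)

lemma lo_val (i : Fin n) : ((lo n i : Fin (2 * n)) : ℕ) = i.1 := rfl
lemma hi_val (i : Fin n) : ((hi n i : Fin (2 * n)) : ℕ) = n + i.1 := rfl

lemma lo_inj {i j : Fin n} : lo n i = lo n j ↔ i = j := by
  simp [lo, Fin.ext_iff]
lemma hi_inj {i j : Fin n} : hi n i = hi n j ↔ i = j := by
  simp [hi, Fin.ext_iff]

lemma rev_lo (i : Fin n) : Fin.rev (lo n i) = hi n (Fin.rev i) := by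
  have := i.2
  simp only [Fin.ext_iff, Fin.val_rev, lo_val, hi_val]
  omega

lemma rev_hi (i : Fin n) : Fin.rev (hi n i) = lo n (Fin.rev i) := by
  have := i.2
  simp only [Fin.ext_iff, Fin.val_rev, lo_val, hi_val]
  omega

lemma fll_inj : Function.Injective (@fll n) := by
  intro a b h
  simp only [fll, Prod.ext_iff, lo_inj] at h
  exact Prod.ext h.1 h.2
lemma fhl_inj : Function.Injective (@fhl n) := by
  intro a b h
  simp only [fhl, Prod.ext_iff, lo_inj, hi_inj] at h
  exact Prod.ext h.1 h.2
lemma flh_inj : Function.Injective (@flh n) := by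
  intro a b h
  simp only [flh, Prod.ext_iff, lo_inj, hi_inj] at h
  exact Prod.ext h.1 h.2
lemma fhh_inj : Function.Injective (@fhh n) := by
  intro a b h
  simp only [fhh, Prod.ext_iff, hi_inj] at h
  exact Prod.ext h.1 h.2

lemma not_range_fll {b : Fin (2 * n) × Fin (2 * n)} (hb : ¬ ∃ a : Fin n × Fin n, fll a = b) :
    ¬ ((b.1 : ℕ) < n ∧ (b.2 : ℕ) < n) := by
  rintro ⟨h1, h2⟩
  exact hb ⟨(⟨b.1, h1⟩, ⟨b.2, h2⟩), by simp [fll, lo, Prod.ext_iff, Fin.ext_iff]⟩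

lemma not_range_fhl {b : Fin (2 * n) × Fin (2 * n)} (hb : ¬ ∃ a : Fin n × Fin n, fhl a = b) :
    ¬ (n ≤ (b.1 : ℕ) ∧ (b.2 : ℕ) < n) := by
  rintro ⟨h1, h2⟩
  have hb1 := b.1.2
  exact hb ⟨(⟨b.1 - n, by omega⟩, ⟨b.2, h2⟩),
    by simp [fhl, lo, hi, Prod.ext_iff, Fin.ext_iff]; omega⟩

lemma not_range_flh {b : Fin (2 * n) × Fin (2 * n)} (hb : ¬ ∃ a : Fin n × Fin n, flh a = b) :
    ¬ ((b.1 : ℕ) < n ∧ n ≤ (b.2 : ℕ)) := by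
  rintro ⟨h1, h2⟩
  have hb2 := b.2.2
  exact hb ⟨(⟨b.1, h1⟩, ⟨b.2 - n, by omega⟩),
    by simp [flh, lo, hi, Prod.ext_iff, Fin.ext_iff]; omega⟩

lemma not_range_fhh {b : Fin (2 * n) × Fin (2 * n)} (hb : ¬ ∃ a : Fin n × Fin n, fhh a = b) :
    ¬ (n ≤ (b.1 : ℕ) ∧ n ≤ (b.2 : ℕ)) := by
  rintro ⟨h1, h2⟩
  have hb1 := b.1.2
  have hb2 := b.2.2
  exact hb ⟨(⟨b.1 - n, by omega⟩, ⟨b.2 - n, by omega⟩),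
    by simp [fhh, hi, Prod.ext_iff, Fin.ext_iff]; omega⟩

lemma yangRA_apply (N : ℕ) (u : ℂ) (p q : Fin N × Fin N) :
    yangRA N A u p q =
      algebraMap ℂ A ((if p = q then 1 else 0)
        - u⁻¹ * (if p.1 = q.2 ∧ p.2 = q.1 then 1 else 0)) := by
  simp [yangRA, permP, Matrix.map_apply, Matrix.sub_apply, Matrix.smul_apply,
    Matrix.one_apply, smul_eq_mul]

lemma yangRtA_apply (N : ℕ) (θ : Fin N → ℂ) (w : ℂ) (p q : Fin N × Fin N) :
    yangRtA N θ A w p q =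
      algebraMap ℂ A ((if p = q then 1 else 0)
        - w⁻¹ * (if p.2 = Fin.rev p.1 ∧ q.2 = Fin.rev q.1 then θ p.1 * θ q.1 else 0)) := by
  simp [yangRtA, Qop, Matrix.map_apply, Matrix.sub_apply, Matrix.smul_apply,
    Matrix.one_apply, smul_eq_mul]

lemma yangRA_eq_zero {N : ℕ} {u : ℂ} {p q : Fin N × Fin N}
    (h1 : p ≠ q) (h2 : ¬ (p.1 = q.2 ∧ p.2 = q.1)) :
    yangRA N A u p q = 0 := by
  rw [yangRA_apply, if_neg h1, if_neg h2]
  simp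

lemma yangRtA_eq_zero_left {N : ℕ} {θ : Fin N → ℂ} {w : ℂ} {p q : Fin N × Fin N}
    (h1 : p ≠ q) (h2 : p.2 ≠ Fin.rev p.1) :
    yangRtA N θ A w p q = 0 := by
  rw [yangRtA_apply, if_neg h1, if_neg (fun h => h2 h.1)]
  simp

lemma yangRtA_eq_zero_right {N : ℕ} {θ : Fin N → ℂ} {w : ℂ} {p q : Fin N × Fin N}
    (h1 : p ≠ q) (h2 : q.2 ≠ Fin.rev q.1) :
    yangRtA N θ A w p q = 0 := by
  rw [yangRtA_apply, if_neg h1, if_neg (fun h => h2 h.2)]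
  simp

lemma op1_eq_zero {N : ℕ} {X : Matrix (Fin N) (Fin N) A} {p q : Fin N × Fin N}
    (h : p.2 ≠ q.2) : op1 X p q = 0 := if_neg h

lemma op2_eq_zero {N : ℕ} {X : Matrix (Fin N) (Fin N) A} {p q : Fin N × Fin N}
    (h : p.1 ≠ q.1) : op2 X p q = 0 := if_neg h

lemma RA_ll (u : ℂ) (p q : Fin n × Fin n) :
    yangRA (2 * n) A u (fll p) (fll q) = yangRA n A u p q := by
  rw [yangRA_apply, yangRA_apply]
  have e1 : fll p = fll q ↔ p = q :=
    ⟨fun h => fll_inj h, fun h => h ▸ rfl⟩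
  have e2 : ((fll p).1 = (fll q).2 ∧ (fll p).2 = (fll q).1) ↔ (p.1 = q.2 ∧ p.2 = q.1) := by
    simp [fll, lo_inj]
  rw [if_congr e1 rfl rfl, if_congr e2 rfl rfl]

lemma RA_hh (u : ℂ) (p q : Fin n × Fin n) :
    yangRA (2 * n) A u (fhh p) (fhh q) = yangRA n A u p q := by
  rw [yangRA_apply, yangRA_apply]
  have e1 : fhh p = fhh q ↔ p = q :=
    ⟨fun h => fhh_inj h, fun h => h ▸ rfl⟩
  have e2 : ((fhh p).1 = (fhh q).2 ∧ (fhh p).2 = (fhh q).1) ↔ (p.1 = q.2 ∧ p.2 = q.1) := by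
    simp [fhh, hi_inj]
  rw [if_congr e1 rfl rfl, if_congr e2 rfl rfl]

lemma Rt_hl {θ : Fin (2 * n) → ℂ} (hθhi : ∀ i : Fin n, θ (hi n i) = 1)
    (w : ℂ) (p q : Fin n × Fin n) :
    yangRtA (2 * n) θ A w (fhl p) (fhl q) = yangRtA n (orthTheta n) A w p q := by
  rw [yangRtA_apply, yangRtA_apply]
  have e1 : fhl p = fhl q ↔ p = q :=
    ⟨fun h => fhl_inj h, fun h => h ▸ rfl⟩
  have e2 : ((fhl p).2 = Fin.rev (fhl p).1 ∧ (fhl q).2 = Fin.rev (fhl q).1) ↔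
      (p.2 = Fin.rev p.1 ∧ q.2 = Fin.rev q.1) := by
    simp [fhl, rev_hi, lo_inj]
  have e3 : θ (fhl p).1 * θ (fhl q).1 = orthTheta n p.1 * orthTheta n q.1 := by
    simp [fhl, hθhi, orthTheta]
  rw [if_congr e1 rfl rfl, if_congr e2 e3 rfl]

lemma Rt_lh {θ : Fin (2 * n) → ℂ} (hθlo : ∀ i j : Fin n, θ (lo n i) * θ (lo n j) = 1)
    (w : ℂ) (p q : Fin n × Fin n) :
    yangRtA (2 * n) θ A w (flh p) (flh q) = yangRtA n (orthTheta n) A w p q := by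
  rw [yangRtA_apply, yangRtA_apply]
  have e1 : flh p = flh q ↔ p = q :=
    ⟨fun h => flh_inj h, fun h => h ▸ rfl⟩
  have e2 : ((flh p).2 = Fin.rev (flh p).1 ∧ (flh q).2 = Fin.rev (flh q).1) ↔
      (p.2 = Fin.rev p.1 ∧ q.2 = Fin.rev q.1) := by
    simp [flh, rev_lo, hi_inj]
  have e3 : θ (flh p).1 * θ (flh q).1 = orthTheta n p.1 * orthTheta n q.1 := by
    simp [flh, hθlo, orthTheta]
  rw [if_congr e1 rfl rfl, if_congr e2 e3 rfl]

lemma op1_ll_hl (X : Matrix (Fin (2 * n)) (Fin (2 * n)) A) (p q : Fin n × Fin n) :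
    op1 X (fll p) (fhl q) = op1 (blockB X) p q := by
  simp only [op1, fll, fhl, blockB]
  exact if_congr (lo_inj (i := p.2) (j := q.2)) rfl rfl

lemma op1_lh_hh (X : Matrix (Fin (2 * n)) (Fin (2 * n)) A) (p q : Fin n × Fin n) :
    op1 X (flh p) (fhh q) = op1 (blockB X) p q := by
  simp only [op1, flh, fhh, blockB]
  exact if_congr (hi_inj (i := p.2) (j := q.2)) rfl rfl

lemma op2_hl_hh (X : Matrix (Fin (2 * n)) (Fin (2 * n)) A) (p q : Fin n × Fin n) :
    op2 X (fhl p) (fhh q) = op2 (blockB X) p q := by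
  simp only [op2, fhl, fhh, blockB]
  exact if_congr (hi_inj (i := p.1) (j := q.1)) rfl rfl

lemma op2_ll_lh (X : Matrix (Fin (2 * n)) (Fin (2 * n)) A) (p q : Fin n × Fin n) :
    op2 X (fll p) (flh q) = op2 (blockB X) p q := by
  simp only [op2, fll, flh, blockB]
  exact if_congr (lo_inj (i := p.1) (j := q.1)) rfl rfl

lemma sum_reindex {α β M : Type*} [Fintype α] [Fintype β] [DecidableEq β] [AddCommMonoid M]
    (f : α → β) (hf : Function.Injective f) (g : β → M)
    (h0 : ∀ b : β, (¬ ∃ a, f a = b) → g b = 0) :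
    (∑ b, g b) = ∑ a, g (f a) := by
  rw [← Finset.sum_image (g := f) (f := g)
    (fun x _ y _ h => hf h)]
  refine (Finset.sum_subset (Finset.subset_univ _) fun b _ hb => ?_).symm
  refine h0 b fun ⟨a, ha⟩ => hb ?_
  exact Finset.mem_image.2 ⟨a, Finset.mem_univ a, ha⟩

/-- `(R^t * S₂)ₗ,(hh y) = 0` when `l.1` is a `lo` index and `l.2` a `lo` index. -/
lemma RtS2_zero {θ : Fin (2 * n) → ℂ} {w : ℂ} {Sv : Matrix (Fin (2 * n)) (Fin (2 * n)) A}
    {l : Fin (2 * n) × Fin (2 * n)} (hl1 : (l.1 : ℕ) < n) (hl2 : (l.2 : ℕ) < n)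
    (y : Fin n × Fin n) :
    (yangRtA (2 * n) θ A w * op2 Sv) l (fhh y) = 0 := by
  rw [Matrix.mul_apply]
  refine Finset.sum_eq_zero fun m _ => ?_
  by_cases hm : m.1 = (fhh y).1
  · have h1 : l ≠ m := by
      intro h
      rw [h, hm] at hl1
      simp [fhh, hi_val] at hl1
    have h2 : l.2 ≠ Fin.rev l.1 := by
      intro h
      have := congrArg Fin.val h
      rw [Fin.val_rev] at this
      omega
    rw [yangRtA_eq_zero_left h1 h2, zero_mul]
  · rw [op2_eq_zero hm, mul_zero]

/-- `(S₁ * R)ₗ,(hh y) = 0` when `l.2` is a `lo` index. -/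
lemma S1R_zero {u : ℂ} {Su : Matrix (Fin (2 * n)) (Fin (2 * n)) A}
    {l : Fin (2 * n) × Fin (2 * n)} (hl2 : (l.2 : ℕ) < n)
    (y : Fin n × Fin n) :
    (op1 Su * yangRA (2 * n) A u) l (fhh y) = 0 := by
  rw [Matrix.mul_apply]
  refine Finset.sum_eq_zero fun m _ => ?_
  by_cases hm : l.2 = m.2
  · have hm2 : (m.2 : ℕ) < n := hm ▸ hl2
    have h1 : m ≠ fhh y := by
      intro h
      rw [h] at hm2
      simp [fhh, hi_val] at hm2
    have h2 : ¬ (m.1 = (fhh y).2 ∧ m.2 = (fhh y).1) := by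
      rintro ⟨-, h⟩
      rw [h] at hm2
      simp [fhh, hi_val] at hm2
    rw [yangRA_eq_zero h1 h2, mul_zero]
  · rw [op1_eq_zero hm, zero_mul]

lemma compressL {θ : Fin (2 * n) → ℂ} (hθhi : ∀ i : Fin n, θ (hi n i) = 1)
    (u' w : ℂ) (Su Sv : Matrix (Fin (2 * n)) (Fin (2 * n)) A) (x y : Fin n × Fin n) :
    (yangRA n A u' * op1 (blockB Su) * yangRtA n (orthTheta n) A w * op2 (blockB Sv)) x y
      = (yangRA (2 * n) A u' * op1 Su * yangRtA (2 * n) θ A w * op2 Sv) (fll x) (fhh y) := by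
  simp only [mul_assoc]
  rw [Matrix.mul_apply, Matrix.mul_apply]
  rw [sum_reindex fll fll_inj _ (fun b hb => by
    have h := not_range_fll hb
    have h1 : fll x ≠ b := by
      intro e; rw [← e] at h; exact h ⟨x.1.2, x.2.2⟩
    have h2 : ¬ ((fll x).1 = b.2 ∧ (fll x).2 = b.1) := by
      rintro ⟨e1, e2⟩; rw [← e1, ← e2] at h; exact h ⟨x.2.2, x.1.2⟩
    rw [yangRA_eq_zero h1 h2, zero_mul])]
  refine Finset.sum_congr rfl fun k _ => ?_
  rw [RA_ll]
  congr 1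
  rw [Matrix.mul_apply, Matrix.mul_apply]
  rw [sum_reindex fhl fhl_inj _ (fun b hb => by
    have h := not_range_fhl hb
    by_cases hb2 : (fll k).2 = b.2
    · have hbl : (b.2 : ℕ) < n := by rw [← hb2]; exact k.2.2
      have hb1 : (b.1 : ℕ) < n := by
        rcases Nat.lt_or_ge (b.1 : ℕ) n with h' | h'
        · exact h'
        · exact absurd ⟨h', hbl⟩ h
      rw [RtS2_zero hb1 hbl, mul_zero]
    · rw [op1_eq_zero hb2, zero_mul])]
  refine Finset.sum_congr rfl fun l _ => ?_
  rw [op1_ll_hl]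
  congr 1
  rw [Matrix.mul_apply, Matrix.mul_apply]
  rw [sum_reindex fhl fhl_inj _ (fun b hb => by
    have h := not_range_fhl hb
    by_cases hm : b.1 = (fhh y).1
    · have hb1 : n ≤ (b.1 : ℕ) := by rw [hm]; exact Nat.le_add_right n _
      have hb2 : ¬ (b.2 : ℕ) < n := fun h' => h ⟨hb1, h'⟩
      have h1 : fhl l ≠ b := by
        intro e; rw [← e] at hb2; exact hb2 l.2.2
      have h2 : b.2 ≠ Fin.rev b.1 := by
        intro e
        have := congrArg Fin.val e
        rw [Fin.val_rev] at this
        omega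
      rw [yangRtA_eq_zero_right h1 h2, zero_mul]
    · rw [op2_eq_zero hm, mul_zero])]
  refine Finset.sum_congr rfl fun m _ => ?_
  rw [Rt_hl hθhi, op2_hl_hh]

lemma compressR {θ : Fin (2 * n) → ℂ} (hθlo : ∀ i j : Fin n, θ (lo n i) * θ (lo n j) = 1)
    (u' w : ℂ) (Su Sv : Matrix (Fin (2 * n)) (Fin (2 * n)) A) (x y : Fin n × Fin n) :
    (op2 (blockB Sv) * yangRtA n (orthTheta n) A w * op1 (blockB Su) * yangRA n A u') x y
      = (op2 Sv * yangRtA (2 * n) θ A w * op1 Su * yangRA (2 * n) A u') (fll x) (fhh y) := by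
  simp only [mul_assoc]
  rw [Matrix.mul_apply, Matrix.mul_apply]
  rw [sum_reindex flh flh_inj _ (fun b hb => by
    have h := not_range_flh hb
    by_cases hb1 : (fll x).1 = b.1
    · have hbl : (b.1 : ℕ) < n := by rw [← hb1]; exact x.1.2
      have hb2 : (b.2 : ℕ) < n := by
        rcases Nat.lt_or_ge (b.2 : ℕ) n with h' | h'
        · exact h'
        · exact absurd ⟨hbl, h'⟩ h
      -- inner factor is zero
      have : (yangRtA (2 * n) θ A w * (op1 Su * yangRA (2 * n) A u')) b (fhh y) = 0 := by
        rw [Matrix.mul_apply]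
        refine Finset.sum_eq_zero fun l _ => ?_
        by_cases hl : n ≤ (l.2 : ℕ)
        · have h1 : b ≠ l := by
            intro e; rw [e] at hb2; omega
          have h2 : b.2 ≠ Fin.rev b.1 := by
            intro e
            have := congrArg Fin.val e
            rw [Fin.val_rev] at this
            omega
          rw [yangRtA_eq_zero_left h1 h2, zero_mul]
        · rw [S1R_zero (Nat.lt_of_not_le hl) y, mul_zero]
      rw [this, mul_zero]
    · rw [op2_eq_zero hb1, zero_mul])]
  refine Finset.sum_congr rfl fun k _ => ?_
  rw [op2_ll_lh]
  congr 1
  rw [Matrix.mul_apply, Matrix.mul_apply]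
  rw [sum_reindex flh flh_inj _ (fun b hb => by
    have h := not_range_flh hb
    by_cases hl : n ≤ (b.2 : ℕ)
    · have hb1 : ¬ (b.1 : ℕ) < n := fun h' => h ⟨h', hl⟩
      have h1 : flh k ≠ b := by
        intro e; rw [← e] at hb1; exact hb1 k.1.2
      have h2 : b.2 ≠ Fin.rev b.1 := by
        intro e
        have := congrArg Fin.val e
        rw [Fin.val_rev] at this
        have := b.1.2
        omega
      rw [yangRtA_eq_zero_right h1 h2, zero_mul]
    · rw [S1R_zero (Nat.lt_of_not_le hl) y, mul_zero])]
  refine Finset.sum_congr rfl fun l _ => ?_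
  rw [Rt_lh hθlo]
  congr 1
  rw [Matrix.mul_apply, Matrix.mul_apply]
  rw [sum_reindex fhh fhh_inj _ (fun b hb => by
    have h := not_range_fhh hb
    by_cases hm : (flh l).2 = b.2
    · have hb2 : n ≤ (b.2 : ℕ) := by rw [← hm]; exact Nat.le_add_right n _
      have hb1 : ¬ n ≤ (b.1 : ℕ) := fun h' => h ⟨h', hb2⟩
      have h1 : b ≠ fhh y := by
        intro e; rw [e] at hb1; exact hb1 (Nat.le_add_right n _)
      have h2 : ¬ (b.1 = (fhh y).2 ∧ b.2 = (fhh y).1) := by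
        rintro ⟨e, -⟩; rw [e] at hb1; exact hb1 (Nat.le_add_right n _)
      rw [yangRA_eq_zero h1 h2, mul_zero]
    · rw [op1_eq_zero hm, zero_mul])]
  refine Finset.sum_congr rfl fun m _ => ?_
  rw [op1_lh_hh, RA_hh]

end Aux

/-- if `S(u) ∈ Mat_{2n}(𝒜)` satisfies the reflection equation with
shift `ρ` on `ℂ^{2n} ⊗ ℂ^{2n}`, then its upper-right block `B(u)` satisfies
`R₁₂(u−v) B₁(u) R^t₁₂(−u−v−ρ) B₂(v) = B₂(v) R^t₁₂(−u−v−ρ) B₁(u) R₁₂(u−v)`,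
where the `n×n` operator `Q` is of orthogonal type in both cases. -/
theorem block_BB_relation (n : ℕ) (ρ : ℂ) (θ : Fin (2 * n) → ℂ)
    (hcase : (∀ i, θ i = 1) ∨
      (∀ i : Fin (2 * n), θ i = if (i : ℕ) < n then -1 else 1))
    (A : Type*) [Ring A] [Algebra ℂ A]
    (S : ℂ → Matrix (Fin (2 * n)) (Fin (2 * n)) A)
    (D : Set ℂ) (hD : Dᶜ.Finite)
    (hRE : ∀ u ∈ D, ∀ v ∈ D, u ≠ v → u + v + ρ ≠ 0 →
      yangRA (2 * n) A (u - v) * op1 (S u) * yangRtA (2 * n) θ A (-u - v - ρ) * op2 (S v) =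
        op2 (S v) * yangRtA (2 * n) θ A (-u - v - ρ) * op1 (S u)
          * yangRA (2 * n) A (u - v)) :
    ∀ u ∈ D, ∀ v ∈ D, u ≠ v → u + v + ρ ≠ 0 →
      yangRA n A (u - v) * op1 (blockB (S u)) * yangRtA n (orthTheta n) A (-u - v - ρ)
          * op2 (blockB (S v)) =
        op2 (blockB (S v)) * yangRtA n (orthTheta n) A (-u - v - ρ)
          * op1 (blockB (S u)) * yangRA n A (u - v) := by
  have hθhi : ∀ i : Fin n, θ (hi n i) = 1 := by
    intro i
    rcases hcase with h | h
    · exact h _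
    · rw [h]
      simp [hi_val]
  have hθlo : ∀ i j : Fin n, θ (lo n i) * θ (lo n j) = 1 := by
    intro i j
    rcases hcase with h | h
    · rw [h, h, one_mul]
    · rw [h, h, if_pos (by simpa [lo_val] using i.2), if_pos (by simpa [lo_val] using j.2)]
      norm_num
  intro u hu v hv huv hsum
  ext x y
  rw [compressL hθhi, compressR hθlo, hRE u hu v hv huv hsum]
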